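/- Reduction of Burnside's Fuchsian equation to Legendre's hypergeometric equation: let D ⊆ ℂ be open and Φ : ℂ → ℂ be holomorphic on D with z(z−1)·Φ''(z) + (2z−1)·Φ'(z) + (1/4)·Φ(z) = 0 for all z ∈ D. Let U ⊆ ℂ be open such that for every x ∈ U one has x⁴ ∈ D and x⁵ − x ≠ 0, and let y : ℂ → ℂ be holomorphic on U with y(x)² = x⁵ − x for all x ∈ U. Then the function Ψ(x) = y(x)·Φ(x⁴) satisfies Ψ''(x) = −(1/4)·(x⁸ + 14x⁴ + 1)/(x⁵ − x)²·Ψ(x) for all x ∈ U. -/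

import Mathlib

/-- Reduction of Burnside's Fuchsian equation to Legendre's hypergeometric equation:
if Φ solves the hypergeometric equation z(z−1)Φ'' + (2z−1)Φ' + (1/4)Φ = 0 on D and
y(x)² = x⁵ − x on U, then Ψ(x) = y(x)·Φ(x⁴) solves
Ψ'' = −(1/4)(x⁸+14x⁴+1)/(x⁵−x)²·Ψ on U. -/
theorem burnside_to_legendre_reduction
    (D U : Set ℂ) (hD : IsOpen D) (hU : IsOpen U)
    (Φ y : ℂ → ℂ) (hΦ : DifferentiableOn ℂ Φ D)
    (hODE : ∀ z ∈ D, z * (z - 1) * deriv (deriv Φ) z + (2 * z - 1) * deriv Φ z +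
      (1 / 4) * Φ z = 0)
    (hUD : ∀ x ∈ U, x ^ 4 ∈ D) (hne : ∀ x ∈ U, x ^ 5 - x ≠ 0)
    (hy : DifferentiableOn ℂ y U) (hy2 : ∀ x ∈ U, y x ^ 2 = x ^ 5 - x) :
    ∀ x ∈ U, deriv (deriv (fun t => y t * Φ (t ^ 4))) x =
      -(1 / 4) * (x ^ 8 + 14 * x ^ 4 + 1) / (x ^ 5 - x) ^ 2 * (y x * Φ (x ^ 4)) := by
  have hΦa : AnalyticOnNhd ℂ Φ D := hΦ.analyticOnNhd hD
  have hya : AnalyticOnNhd ℂ y U := hy.analyticOnNhd hU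
  have hΦ'a : AnalyticOnNhd ℂ (deriv Φ) D := hΦa.deriv
  have hy'a : AnalyticOnNhd ℂ (deriv y) U := hya.deriv
  have hpow : ∀ t : ℂ, HasDerivAt (fun s : ℂ => s ^ 4) (4 * t ^ 3) t := by
    intro t; simpa using hasDerivAt_pow 4 t
  -- first derivative of Ψ on U
  have hΨ' : ∀ t ∈ U, HasDerivAt (fun s => y s * Φ (s ^ 4))
      (deriv y t * Φ (t ^ 4) + y t * (deriv Φ (t ^ 4) * (4 * t ^ 3))) t := by
    intro t ht
    have h1 : HasDerivAt y (deriv y t) t := (hya t ht).differentiableAt.hasDerivAt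
    have h2 : HasDerivAt Φ (deriv Φ (t ^ 4)) (t ^ 4) :=
      (hΦa _ (hUD t ht)).differentiableAt.hasDerivAt
    exact h1.mul (h2.comp t (hpow t))
  -- relation from differentiating y^2 = x^5 - x on U
  have hrel : ∀ t ∈ U, 2 * y t * deriv y t = 5 * t ^ 4 - 1 := by
    intro t ht
    have h1 : HasDerivAt (fun s => y s ^ 2) (2 * y t * deriv y t) t := by
      simpa using ((hya t ht).differentiableAt.hasDerivAt).fun_pow 2
    have h2 : HasDerivAt (fun s : ℂ => s ^ 5 - s) (5 * t ^ 4 - 1) t := by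
      simpa using (hasDerivAt_pow 5 t).fun_sub (hasDerivAt_id t)
    have hev2 : (fun s => y s ^ 2) =ᶠ[nhds t] (fun s : ℂ => s ^ 5 - s) := by
      filter_upwards [hU.mem_nhds ht] with s hs using hy2 s hs
    calc 2 * y t * deriv y t = deriv (fun s => y s ^ 2) t := h1.deriv.symm
      _ = deriv (fun s : ℂ => s ^ 5 - s) t := hev2.deriv_eq
      _ = 5 * t ^ 4 - 1 := h2.deriv
  intro x hx
  set g : ℂ → ℂ := fun t => deriv y t * Φ (t ^ 4) + y t * (deriv Φ (t ^ 4) * (4 * t ^ 3)) with hg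
  have hev : deriv (fun s => y s * Φ (s ^ 4)) =ᶠ[nhds x] g := by
    filter_upwards [hU.mem_nhds hx] with t ht
    exact (hΨ' t ht).deriv
  rw [hev.deriv_eq]
  have hxD := hUD x hx
  have hyx : HasDerivAt y (deriv y x) x := (hya x hx).differentiableAt.hasDerivAt
  have hy'x : HasDerivAt (deriv y) (deriv (deriv y) x) x :=
    (hy'a x hx).differentiableAt.hasDerivAt
  have hΦx : HasDerivAt Φ (deriv Φ (x ^ 4)) (x ^ 4) := (hΦa _ hxD).differentiableAt.hasDerivAt
  have hΦ'x : HasDerivAt (deriv Φ) (deriv (deriv Φ) (x ^ 4)) (x ^ 4) :=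
    (hΦ'a _ hxD).differentiableAt.hasDerivAt
  have hcomp : HasDerivAt (fun s : ℂ => Φ (s ^ 4)) (deriv Φ (x ^ 4) * (4 * x ^ 3)) x :=
    hΦx.comp x (hpow x)
  have hcomp' : HasDerivAt (fun s : ℂ => deriv Φ (s ^ 4))
      (deriv (deriv Φ) (x ^ 4) * (4 * x ^ 3)) x := hΦ'x.comp (h₂ := deriv Φ) x (hpow x)
  have hcube : HasDerivAt (fun s : ℂ => 4 * s ^ 3) (12 * x ^ 2) x := by
    have := (hasDerivAt_pow 3 x).const_mul (4 : ℂ)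
    norm_num at this
    exact this.congr_deriv (by ring)
  have hgd : HasDerivAt g
      (deriv (deriv y) x * Φ (x ^ 4) + deriv y x * (deriv Φ (x ^ 4) * (4 * x ^ 3)) +
        (deriv y x * (deriv Φ (x ^ 4) * (4 * x ^ 3)) +
          y x * (deriv (deriv Φ) (x ^ 4) * (4 * x ^ 3) * (4 * x ^ 3) +
            deriv Φ (x ^ 4) * (12 * x ^ 2)))) x :=
    (hy'x.mul hcomp).add (hyx.mul (hcomp'.mul hcube))
  rw [hgd.deriv]
  -- second relation: differentiate hrel on U
  have h3 : 2 * deriv y x * deriv y x + 2 * y x * deriv (deriv y) x = 20 * x ^ 3 := by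
    have h1 : HasDerivAt (fun t => 2 * y t * deriv y t)
        (2 * deriv y x * deriv y x + 2 * y x * deriv (deriv y) x) x := by
      have := ((hyx.const_mul (2 : ℂ)).mul hy'x)
      exact this.congr_deriv (by ring)
    have h2 : HasDerivAt (fun t : ℂ => 5 * t ^ 4 - 1) (20 * x ^ 3) x := by
      have := ((hasDerivAt_pow 4 x).const_mul (5 : ℂ)).sub_const 1
      norm_num at this
      exact (this.sub_const 1).congr_deriv (by ring)
    have hev2 : (fun t => 2 * y t * deriv y t) =ᶠ[nhds x] (fun t : ℂ => 5 * t ^ 4 - 1) := by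
      filter_upwards [hU.mem_nhds hx] with s hs using hrel s hs
    calc 2 * deriv y x * deriv y x + 2 * y x * deriv (deriv y) x
        = deriv (fun t => 2 * y t * deriv y t) x := h1.deriv.symm
      _ = deriv (fun t : ℂ => 5 * t ^ 4 - 1) x := hev2.deriv_eq
      _ = 20 * x ^ 3 := h2.deriv
  -- algebra
  have h1 : y x ^ 2 = x ^ 5 - x := hy2 x hx
  have h2 : 2 * y x * deriv y x = 5 * x ^ 4 - 1 := hrel x hx
  have h4 := hODE (x ^ 4) hxD
  have hxne : x ^ 5 - x ≠ 0 := hne x hx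
  set a := y x
  set b := deriv y x
  set c := deriv (deriv y) x
  set P := Φ (x ^ 4)
  set Q := deriv Φ (x ^ 4)
  set R := deriv (deriv Φ) (x ^ 4)
  rw [div_mul_eq_mul_div, eq_div_iff (pow_ne_zero 2 hxne)]
  linear_combination (16 * a ^ 3 * x ^ 3) * h4 + (a ^ 3 * P / 2) * h3 +
      (16 * a ^ 3 * x ^ 6 * R + 12 * x ^ 2 * a ^ 3 * Q + 6 * x ^ 3 * a * P -
        (c * P + 8 * b * x ^ 3 * Q + 12 * a * x ^ 2 * Q + 16 * a * x ^ 6 * R) *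
          (a ^ 2 + (x ^ 5 - x))) * h1 +
      (4 * x ^ 3 * a ^ 3 * Q - (a * P / 4) * (2 * a * b + 5 * x ^ 4 - 1)) * h2
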